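/- Let f_0,…,f_m : {-1,1}^n → ℝ and g_0,…,g_n : {-1,1}^m → ℝ with g_1,…,g_n, f_1,…,f_m nonconstant, satisfying the generalized polymorphism identity. Let Z_0 ⊆ [n]×[m] be the set of coordinates (i,j) on which the common function z ↦ f_0(g_1(z_{1·}),…,g_n(z_{n·})) depends. Then Z_0 = {(i,j) : i ∈ dep(f_0) and j ∈ dep(g_i)} = {(i,j) : j ∈ dep(g_0) and i ∈ dep(f_j)}. -/

import Mathlib

open Finset

/-- `x` lies on the Boolean cube `{-1,1}^ι`. -/
def IsCube {ι : Type*} (x : ι → ℝ) : Prop := ∀ i, x i = 1 ∨ x i = -1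

/-- `f` depends on coordinate `w` (over the Boolean cube). -/
def CubeDependsOn {ι : Type*} [DecidableEq ι] (f : (ι → ℝ) → ℝ) (w : ι) : Prop :=
  ∃ x : ι → ℝ, IsCube x ∧ f (Function.update x w 1) ≠ f (Function.update x w (-1))

section Eev
variable {ι : Type*} [Fintype ι] [DecidableEq ι]

def Eev (c : Finset ι → ℝ) (x : ι → ℝ) : ℝ := ∑ S : Finset ι, c S * ∏ i ∈ S, x i

def derc (c : Finset ι → ℝ) (w : ι) : Finset ι → ℝ :=
  fun S => if w ∈ S then 0 else c (insert w S)

def restc (c : Finset ι → ℝ) (w : ι) : Finset ι → ℝ :=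
  fun S => if w ∈ S then 0 else c S

lemma Eev_update (c : Finset ι → ℝ) (w : ι) (x : ι → ℝ) (t : ℝ) :
    Eev c (Function.update x w t) = Eev (restc c w) x + t * Eev (derc c w) x := by
  classical
  unfold Eev restc derc
  rw [← Finset.sum_filter_add_sum_filter_not Finset.univ (fun S => w ∈ S)
      (fun S => c S * ∏ i ∈ S, Function.update x w t i)]
  have hB : ∑ S ∈ Finset.univ.filter (fun S : Finset ι => w ∉ S),
        c S * ∏ i ∈ S, Function.update x w t i
      = ∑ S : Finset ι, (if w ∈ S then 0 else c S) * ∏ i ∈ S, x i := by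
    rw [Finset.sum_filter]
    apply Finset.sum_congr rfl
    intro S _
    by_cases hw : w ∈ S
    · simp [hw]
    · have h1 : ∏ i ∈ S, Function.update x w t i = ∏ i ∈ S, x i :=
        Finset.prod_congr rfl fun i hi =>
          Function.update_of_ne (ne_of_mem_of_not_mem hi hw) _ _
      simp [hw, h1]
  have hA : ∑ S ∈ Finset.univ.filter (fun S : Finset ι => w ∈ S),
        c S * ∏ i ∈ S, Function.update x w t i
      = t * ∑ S : Finset ι, (if w ∈ S then 0 else c (insert w S)) * ∏ i ∈ S, x i := by
    rw [Finset.mul_sum]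
    rw [show (∑ S : Finset ι, t * ((if w ∈ S then 0 else c (insert w S)) * ∏ i ∈ S, x i))
        = ∑ S ∈ Finset.univ.filter (fun S : Finset ι => w ∉ S),
            t * (c (insert w S) * ∏ i ∈ S, x i) from ?_]
    · apply Finset.sum_nbij' (fun S => Finset.erase S w) (fun S => insert w S)
      · intro S hS
        simp only [Finset.mem_filter, Finset.mem_univ, true_and] at hS ⊢
        exact Finset.notMem_erase _ _
      · intro S hS
        simp only [Finset.mem_filter, Finset.mem_univ, true_and]
        exact Finset.mem_insert_self _ _
      · intro S hS
        simp only [Finset.mem_filter, Finset.mem_univ, true_and] at hS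
        exact Finset.insert_erase hS
      · intro S hS
        simp only [Finset.mem_filter, Finset.mem_univ, true_and] at hS
        exact Finset.erase_insert hS
      · intro S hS
        simp only [Finset.mem_filter, Finset.mem_univ, true_and] at hS
        rw [Finset.insert_erase hS]
        have h1 : ∏ i ∈ S, Function.update x w t i
            = t * ∏ i ∈ S.erase w, x i := by
          rw [← Finset.mul_prod_erase S _ hS, Function.update_self]
          congr 1
          exact Finset.prod_congr rfl fun i hi =>
            Function.update_of_ne (Finset.ne_of_mem_erase hi) _ _
        rw [h1]; ring
    · rw [Finset.sum_filter]
      apply Finset.sum_congr rfl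
      intro S _
      by_cases hw : w ∈ S <;> simp [hw]
  rw [hA, hB]; ring

lemma Eev_congr_off (d : Finset ι → ℝ) (w : ι) (hd : ∀ S, w ∈ S → d S = 0)
    (v v' : ι → ℝ) (hvv : ∀ k, k ≠ w → v k = v' k) : Eev d v = Eev d v' := by
  unfold Eev
  apply Finset.sum_congr rfl
  intro S _
  by_cases hw : w ∈ S
  · rw [hd S hw]; ring
  · congr 1
    exact Finset.prod_congr rfl fun i hi => hvv i (ne_of_mem_of_not_mem hi hw)

def Affineish (h : (ι → ℝ) → ℝ) : Prop :=
  ∀ (w : ι) (x : ι → ℝ), ∃ a b : ℝ, ∀ t, h (Function.update x w t) = a + t * b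

lemma affineish_Eev (c : Finset ι → ℝ) : Affineish (Eev c) := fun w x =>
  ⟨Eev (restc c w) x, Eev (derc c w) x, fun t => Eev_update c w x t⟩

lemma exists_cube {h : (ι → ℝ) → ℝ} (hh : Affineish h) {x : ι → ℝ} (hx : h x ≠ 0) :
    ∃ y, IsCube y ∧ h y ≠ 0 := by
  suffices H : ∀ s : Finset ι, ∃ y : ι → ℝ, (∀ w ∈ s, y w = 1 ∨ y w = -1) ∧ h y ≠ 0 by
    obtain ⟨y, h1, h2⟩ := H Finset.univ
    exact ⟨y, fun i => h1 i (Finset.mem_univ i), h2⟩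
  intro s
  induction s using Finset.induction with
  | empty => exact ⟨x, by simp, hx⟩
  | @insert w s hw ih =>
    obtain ⟨y, hy1, hy2⟩ := ih
    obtain ⟨a, b, hab⟩ := hh w y
    have hyy : h y = a + y w * b := by
      have := hab (y w); rwa [Function.update_eq_self] at this
    have hcube : ∀ t : ℝ, (t = 1 ∨ t = -1) →
        ∀ w' ∈ insert w s, Function.update y w t w' = 1 ∨ Function.update y w t w' = -1 := by
      intro t ht w' hw'
      rcases eq_or_ne w' w with rfl | hne
      · rw [Function.update_self]; exact ht
      · rw [Function.update_of_ne hne]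
        exact hy1 w' ((Finset.mem_insert.mp hw').resolve_left hne)
    by_cases h1 : h (Function.update y w 1) = 0
    · by_cases h2 : h (Function.update y w (-1)) = 0
      · exfalso
        have e1 := hab 1
        have e2 := hab (-1)
        rw [h1] at e1; rw [h2] at e2
        apply hy2
        rw [hyy]
        have hb : b = 0 := by linarith
        have ha : a = 0 := by linarith
        rw [ha, hb]; ring
      · exact ⟨Function.update y w (-1), hcube (-1) (Or.inr rfl), h2⟩
    · exact ⟨Function.update y w 1, hcube 1 (Or.inl rfl), h1⟩

lemma dependsOn_Eev_iff (c : Finset ι → ℝ) (w : ι) :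
    CubeDependsOn (Eev c) w ↔ ∃ x, IsCube x ∧ Eev (derc c w) x ≠ 0 := by
  constructor
  · rintro ⟨x, hx, hne⟩
    refine ⟨x, hx, fun h0 => hne ?_⟩
    rw [Eev_update, Eev_update, h0]; ring
  · rintro ⟨x, hx, h0⟩
    refine ⟨x, hx, fun heq => h0 ?_⟩
    rw [Eev_update, Eev_update] at heq; linarith

lemma const_of_no_slope {h : (ι → ℝ) → ℝ} (hh : Affineish h)
    (h0 : ∀ (w : ι) (x : ι → ℝ), h (Function.update x w 1) = h (Function.update x w (-1)))
    (y y' : ι → ℝ) : h y = h y' := by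
  have key : ∀ (w : ι) (x : ι → ℝ) (t t' : ℝ),
      h (Function.update x w t) = h (Function.update x w t') := by
    intro w x t t'
    obtain ⟨a, b, hab⟩ := hh w x
    have e1 := hab 1
    have e2 := hab (-1)
    have := h0 w x
    have hb : b = 0 := by rw [e1, e2] at this; linarith
    rw [hab t, hab t', hb]; ring
  suffices H : ∀ s : Finset ι, h (fun k => if k ∈ s then y' k else y k) = h y by
    have h1 := H Finset.univ
    have h2 : (fun k => if k ∈ Finset.univ then y' k else y k) = y' :=
      funext fun k => if_pos (Finset.mem_univ k)
    rw [h2] at h1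
    exact h1.symm
  intro s
  induction s using Finset.induction with
  | empty => simp
  | @insert w s hw ih =>
    have hz : (fun k => if k ∈ insert w s then y' k else y k)
        = Function.update (fun k => if k ∈ s then y' k else y k) w (y' w) := by
      funext k
      rcases eq_or_ne k w with rfl | hne
      · simp
      · rw [Function.update_of_ne hne]
        simp [Finset.mem_insert, hne]
    rw [hz]
    have h3 := key w (fun k => if k ∈ s then y' k else y k) (y' w)
      ((fun k => if k ∈ s then y' k else y k) w)
    rw [Function.update_eq_self] at h3
    rw [h3]
    exact ih

lemma Eev_surj (c : Finset ι → ℝ)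
    (hnc : ∃ y y' : ι → ℝ, IsCube y ∧ IsCube y' ∧ Eev c y ≠ Eev c y') :
    Function.Surjective (Eev c) := by
  obtain ⟨y, y', _, _, hne⟩ := hnc
  by_cases h0 : ∀ (w : ι) (x : ι → ℝ),
      Eev c (Function.update x w 1) = Eev c (Function.update x w (-1))
  · exact absurd (const_of_no_slope (affineish_Eev c) h0 y y') hne
  push_neg at h0
  obtain ⟨w, x, hwx⟩ := h0
  have hb : Eev (derc c w) x ≠ 0 := by
    intro h
    apply hwx
    rw [Eev_update, Eev_update, h]; ring
  intro r
  refine ⟨Function.update x w ((r - Eev (restc c w) x) / Eev (derc c w) x), ?_⟩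
  rw [Eev_update]
  field_simp
  ring

end Eev

section Core
variable {ι κ : Type*} [Fintype ι] [DecidableEq ι] [Fintype κ] [DecidableEq κ]

lemma core (cφ : Finset ι → ℝ) (cγ : ι → Finset κ → ℝ)
    (hnc : ∀ k : ι, ∃ y y' : κ → ℝ, IsCube y ∧ IsCube y' ∧ Eev (cγ k) y ≠ Eev (cγ k) y')
    (i : ι) (j : κ) :
    CubeDependsOn (fun w : ι × κ → ℝ => Eev cφ (fun k => Eev (cγ k) (fun l => w (k, l)))) (i, j)
      ↔ CubeDependsOn (Eev cφ) i ∧ CubeDependsOn (Eev (cγ i)) j := by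
  classical
  set dφ := derc cφ i with hdφ_def
  set dγ := derc (cγ i) j with hdγ_def
  set G : (ι × κ → ℝ) → ι → ℝ := fun w k => Eev (cγ k) (fun l => w (k, l)) with hG_def
  set F : (ι × κ → ℝ) → ℝ := fun w => Eev cφ (G w) with hF_def
  -- row update
  have hrow : ∀ (x : ι × κ → ℝ) (k : ι) (l : κ) (t : ℝ) (k' : ι),
      (fun l' => Function.update x (k, l) t (k', l'))
        = if k' = k then Function.update (fun l' => x (k', l')) l t
          else (fun l' => x (k', l')) := by
    intro x k l t k'
    rcases eq_or_ne k' k with rfl | hne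
    · rw [if_pos rfl]
      funext l'
      rcases eq_or_ne l' l with rfl | h
      · rw [Function.update_self, Function.update_self]
      · rw [Function.update_of_ne h,
          Function.update_of_ne (by simp [Prod.ext_iff, h])]
    · rw [if_neg hne]
      funext l'
      rw [Function.update_of_ne (by simp [Prod.ext_iff, hne])]
  have hGupd : ∀ (x : ι × κ → ℝ) (k : ι) (l : κ) (t : ℝ),
      G (Function.update x (k, l) t)
        = Function.update (G x) k (Eev (cγ k) (Function.update (fun l' => x (k, l')) l t)) := by
    intro x k l t
    funext k'
    rcases eq_or_ne k' k with rfl | hne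
    · rw [Function.update_self]
      show Eev (cγ k') (fun l' => Function.update x (k', l) t (k', l')) = _
      rw [hrow x k' l t k', if_pos rfl]
    · rw [Function.update_of_ne hne]
      show Eev (cγ k') (fun l' => Function.update x (k, l) t (k', l')) = G x k'
      rw [hrow x k l t k', if_neg hne]
  have hdφ0 : ∀ S, i ∈ S → dφ S = 0 := fun S hS => if_pos hS
  -- main formula
  have hFupd : ∀ (w : ι × κ → ℝ) (t : ℝ),
      F (Function.update w (i, j) t)
        = Eev (restc cφ i) (G w)
          + (Eev (restc (cγ i) j) (fun l' => w (i, l'))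
              + t * Eev dγ (fun l' => w (i, l'))) * Eev dφ (G w) := by
    intro w t
    show Eev cφ (G (Function.update w (i, j) t)) = _
    rw [hGupd w i j t, Eev_update, Eev_update]
  set D : (ι × κ → ℝ) → ℝ :=
    fun w => Eev dγ (fun l' => w (i, l')) * Eev dφ (G w) with hD_def
  have hdiff : ∀ w, F (Function.update w (i, j) 1) - F (Function.update w (i, j) (-1))
      = 2 * D w := by
    intro w
    rw [hFupd, hFupd]; ring
  have hFdep : CubeDependsOn F (i, j) ↔ ∃ w, IsCube w ∧ D w ≠ 0 := by
    constructor
    · rintro ⟨w, hw, hne⟩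
      refine ⟨w, hw, fun h => hne ?_⟩
      have := hdiff w
      rw [h] at this
      linarith
    · rintro ⟨w, hw, h⟩
      refine ⟨w, hw, fun heq => h ?_⟩
      have := hdiff w
      rw [heq] at this
      linarith
  -- D is affineish
  have hDaff : Affineish D := by
    rintro ⟨k, l⟩ x
    rcases eq_or_ne k i with rfl | hk
    · -- k = i : second factor constant, first affine
      have hQ : ∀ t : ℝ, Eev dφ (G (Function.update x (k, l) t)) = Eev dφ (G x) := by
        intro t
        rw [hGupd]
        exact Eev_congr_off dφ k hdφ0 _ _
          (fun k' hk' => Function.update_of_ne hk' _ _)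
      refine ⟨Eev (restc dγ l) (fun l' => x (k, l')) * Eev dφ (G x),
        Eev (derc dγ l) (fun l' => x (k, l')) * Eev dφ (G x), fun t => ?_⟩
      show Eev dγ (fun l' => Function.update x (k, l) t (k, l')) * _ = _
      rw [hrow x k l t k, if_pos rfl, hQ t, Eev_update]
      ring
    · -- k ≠ i : first factor constant, second affine
      have hB : ∀ t : ℝ, (fun l' => Function.update x (k, l) t (i, l'))
          = fun l' => x (i, l') := by
        intro t
        rw [hrow x k l t i, if_neg (Ne.symm hk)]
      refine ⟨Eev dγ (fun l' => x (i, l'))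
          * (Eev (restc dφ k) (G x)
            + Eev (restc (cγ k) l) (fun l' => x (k, l')) * Eev (derc dφ k) (G x)),
        Eev dγ (fun l' => x (i, l'))
          * (Eev (derc (cγ k) l) (fun l' => x (k, l')) * Eev (derc dφ k) (G x)),
        fun t => ?_⟩
      show Eev dγ (fun l' => Function.update x (k, l) t (i, l'))
          * Eev dφ (G (Function.update x (k, l) t)) = _
      rw [hB t, hGupd, Eev_update, Eev_update]
      ring
  constructor
  · intro h
    obtain ⟨w, hw, hD⟩ := hFdep.mp h
    obtain ⟨h1, h2⟩ := mul_ne_zero_iff.mp hD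
    constructor
    · obtain ⟨x, hx, hne⟩ := exists_cube (affineish_Eev dφ) h2
      exact (dependsOn_Eev_iff cφ i).mpr ⟨x, hx, hne⟩
    · exact (dependsOn_Eev_iff (cγ i) j).mpr ⟨fun l' => w (i, l'), fun l' => hw (i, l'), h1⟩
  · rintro ⟨hφ, hγ⟩
    obtain ⟨x, hx, hdφx⟩ := (dependsOn_Eev_iff cφ i).mp hφ
    obtain ⟨y, hy, hdγy⟩ := (dependsOn_Eev_iff (cγ i) j).mp hγ
    have hsurj : ∀ k : ι, ∃ r : κ → ℝ, Eev (cγ k) r = x k :=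
      fun k => Eev_surj (cγ k) (hnc k) (x k)
    choose r hr using hsurj
    set w0 : ι × κ → ℝ := fun p => if p.1 = i then y p.2 else r p.1 p.2 with hw0_def
    have hrowi : (fun l' => w0 (i, l')) = y := funext fun l' => if_pos rfl
    have hGw : ∀ k, k ≠ i → G w0 k = x k := by
      intro k hk
      show Eev (cγ k) (fun l' => w0 (k, l')) = x k
      rw [show (fun l' => w0 (k, l')) = r k from funext fun l' => if_neg hk, hr k]
    have hQ : Eev dφ (G w0) = Eev dφ x := Eev_congr_off dφ i hdφ0 _ _ hGw
    have hD0 : D w0 ≠ 0 := by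
      apply mul_ne_zero
      · rw [hrowi]; exact hdγy
      · rw [hQ]; exact hdφx
    obtain ⟨w', hw', hD'⟩ := exists_cube hDaff hD0
    exact hFdep.mpr ⟨w', hw', hD'⟩

end Core

lemma isCube_update {α : Type*} [DecidableEq α] {x : α → ℝ} (hx : IsCube x) (p : α)
    {t : ℝ} (ht : t = 1 ∨ t = -1) : IsCube (Function.update x p t) := by
  intro i
  rcases eq_or_ne i p with rfl | h
  · rw [Function.update_self]; exact ht
  · rw [Function.update_of_ne h]; exact hx i

lemma dependsOn_congr_cube {α : Type*} [DecidableEq α] {h₁ h₂ : (α → ℝ) → ℝ}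
    (hc : ∀ x, IsCube x → h₁ x = h₂ x) (p : α) :
    CubeDependsOn h₁ p ↔ CubeDependsOn h₂ p := by
  constructor
  · rintro ⟨x, hx, hne⟩
    refine ⟨x, hx, ?_⟩
    rw [← hc _ (isCube_update hx p (Or.inl rfl)), ← hc _ (isCube_update hx p (Or.inr rfl))]
    exact hne
  · rintro ⟨x, hx, hne⟩
    refine ⟨x, hx, ?_⟩
    rw [hc _ (isCube_update hx p (Or.inl rfl)), hc _ (isCube_update hx p (Or.inr rfl))]
    exact hne

lemma dependsOn_reindex {α β : Type*} [DecidableEq α] [DecidableEq β]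
    (e : α ≃ β) (h : (α → ℝ) → ℝ) (a : α) :
    CubeDependsOn (fun v : β → ℝ => h (fun a' => v (e a'))) (e a) ↔ CubeDependsOn h a := by
  have key : ∀ (v : β → ℝ) (t : ℝ),
      (fun a' => Function.update v (e a) t (e a')) = Function.update (fun a' => v (e a')) a t := by
    intro v t
    funext a'
    rcases eq_or_ne a' a with rfl | hne
    · rw [Function.update_self, Function.update_self]
    · rw [Function.update_of_ne (fun hh => hne (e.injective hh)),
        Function.update_of_ne hne]
  constructor
  · rintro ⟨v, hv, hne⟩
    refine ⟨fun a' => v (e a'), fun a' => hv (e a'), ?_⟩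
    rw [← key v 1, ← key v (-1)]
    exact hne
  · rintro ⟨x, hx, hne⟩
    refine ⟨fun b => x (e.symm b), fun b => hx _, ?_⟩
    show h (fun a' => Function.update (fun b => x (e.symm b)) (e a) 1 (e a'))
        ≠ h (fun a' => Function.update (fun b => x (e.symm b)) (e a) (-1) (e a'))
    rw [key, key]
    have hxx : (fun a' => x (e.symm (e a'))) = x := funext fun a' => by rw [e.symm_apply_apply]
    rw [hxx]
    exact hne

/-- For a generalized polymorphism with nonconstant inner functions,
the set `Z₀` of coordinates `(i,j)` on which the common composed function depends
equals `{(i,j) : i ∈ dep(f₀), j ∈ dep(gᵢ)} = {(i,j) : j ∈ dep(g₀), i ∈ dep(fⱼ)}`. -/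
theorem stmt_9 (n m : ℕ)
    (f : Fin (m + 1) → (Fin n → ℝ) → ℝ) (g : Fin (n + 1) → (Fin m → ℝ) → ℝ)
    (fc : Fin (m + 1) → Finset (Fin n) → ℝ) (gc : Fin (n + 1) → Finset (Fin m) → ℝ)
    (hfexp : ∀ (j : Fin (m + 1)) (x : Fin n → ℝ),
      f j x = ∑ S : Finset (Fin n), fc j S * ∏ i ∈ S, x i)
    (hgexp : ∀ (i : Fin (n + 1)) (y : Fin m → ℝ),
      g i y = ∑ T : Finset (Fin m), gc i T * ∏ j ∈ T, y j)
    (hncf : ∀ j : Fin m, ∃ x x' : Fin n → ℝ, IsCube x ∧ IsCube x' ∧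
      f j.succ x ≠ f j.succ x')
    (hncg : ∀ i : Fin n, ∃ y y' : Fin m → ℝ, IsCube y ∧ IsCube y' ∧
      g i.succ y ≠ g i.succ y')
    (hpoly : ∀ z : Fin n → Fin m → ℝ, (∀ i j, z i j = 1 ∨ z i j = -1) →
      f 0 (fun i => g i.succ (z i)) = g 0 (fun j => f j.succ (fun i => z i j))) :
    ∀ p : Fin n × Fin m,
      (CubeDependsOn (fun w : Fin n × Fin m → ℝ =>
          f 0 (fun i => g i.succ (fun j => w (i, j)))) p ↔
        (CubeDependsOn (f 0) p.1 ∧ CubeDependsOn (g p.1.succ) p.2)) ∧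
      (CubeDependsOn (fun w : Fin n × Fin m → ℝ =>
          f 0 (fun i => g i.succ (fun j => w (i, j)))) p ↔
        (CubeDependsOn (g 0) p.2 ∧ CubeDependsOn (f p.2.succ) p.1)) := by
  have hf : ∀ jj, f jj = Eev (fc jj) := fun jj => funext (hfexp jj)
  have hg : ∀ ii, g ii = Eev (gc ii) := fun ii => funext (hgexp ii)
  rintro ⟨i, j⟩
  have hncg' : ∀ k : Fin n, ∃ y y' : Fin m → ℝ, IsCube y ∧ IsCube y' ∧
      Eev (gc k.succ) y ≠ Eev (gc k.succ) y' := by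
    intro k
    obtain ⟨y, y', h1, h2, h3⟩ := hncg k
    exact ⟨y, y', h1, h2, by rw [← hg k.succ]; exact h3⟩
  have hncf' : ∀ l : Fin m, ∃ x x' : Fin n → ℝ, IsCube x ∧ IsCube x' ∧
      Eev (fc l.succ) x ≠ Eev (fc l.succ) x' := by
    intro l
    obtain ⟨x, x', h1, h2, h3⟩ := hncf l
    exact ⟨x, x', h1, h2, by rw [← hf l.succ]; exact h3⟩
  constructor
  · have := core (fc 0) (fun k => gc k.succ) hncg' i j
    simp only [hf, hg]
    exact this
  · have hFG : ∀ w : Fin n × Fin m → ℝ, IsCube w →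
        f 0 (fun i => g i.succ (fun j => w (i, j)))
          = g 0 (fun l => f l.succ (fun k => w (k, l))) := by
      intro w hw
      exact hpoly (fun k l => w (k, l)) (fun k l => hw (k, l))
    have step1 : CubeDependsOn (fun w : Fin n × Fin m → ℝ =>
          f 0 (fun i => g i.succ (fun j => w (i, j)))) (i, j)
        ↔ CubeDependsOn (fun w : Fin n × Fin m → ℝ =>
          g 0 (fun l => f l.succ (fun k => w (k, l)))) (i, j) :=
      dependsOn_congr_cube hFG (i, j)
    have step2 : CubeDependsOn (fun w : Fin n × Fin m → ℝ =>
          g 0 (fun l => f l.succ (fun k => w (k, l)))) (i, j)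
        ↔ CubeDependsOn (fun v : Fin m × Fin n → ℝ =>
          g 0 (fun l => f l.succ (fun k => v (l, k)))) (j, i) :=
      dependsOn_reindex (Equiv.prodComm (Fin m) (Fin n))
        (fun v : Fin m × Fin n → ℝ => g 0 (fun l => f l.succ (fun k => v (l, k)))) (j, i)
    have step3 : CubeDependsOn (fun v : Fin m × Fin n → ℝ =>
          g 0 (fun l => f l.succ (fun k => v (l, k)))) (j, i)
        ↔ CubeDependsOn (g 0) j ∧ CubeDependsOn (f j.succ) i := by
      have := core (gc 0) (fun l => fc l.succ) hncf' j i
      simp only [hf, hg]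
      exact this
    exact (step1.trans step2).trans step3
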